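/- Let k be a positive integer, t a real number with |t| < 1, and λ1, λ2 integers with 0 ≤ λ1, λ2 ≤ k. Then ∫_0^π ( sin((λ1+1)θ) − t·sin((λ1−1)θ) )·( sin((λ2+1)θ) − t·sin((λ2−1)θ) ) / (1 − 2t·cos(2θ) + t²) dθ equals (π/2)·(1+t) if λ1 = λ2 = 0, equals π/2 if λ1 = λ2 ≥ 1, and equals 0 if λ1 ≠ λ2, where λi−1 is interpreted as an integer (so sin((λi−1)θ) = −sin θ when λi = 0). (This is the first orthogonality relation of the SU(2) deformed characters Θ_λ with respect to the t-deformed Weyl measure, i.e. the Hall–Littlewood orthogonality underlying the semi-stable contribution (d_λ^{ss})^{−1} = (1−t)·∑_{w∈W_λ} t^{ℓ(w)}.) -/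

import Mathlib

open Real Complex

private lemma integral_cos_int_mul (c : ℤ) :
    (∫ θ in (0:ℝ)..Real.pi, Real.cos (c * θ)) = if c = 0 then Real.pi else 0 := by
  rcases eq_or_ne c 0 with rfl | hc
  · simp
  · have hc' : (c : ℝ) ≠ 0 := Int.cast_ne_zero.mpr hc
    rw [if_neg hc]
    have h := intervalIntegral.integral_comp_mul_left (a := (0:ℝ)) (b := Real.pi)
      (fun x => Real.cos x) hc'
    rw [h]
    simp [integral_cos, Real.sin_int_mul_pi]

private lemma integral_sin_mul_sin_int (a b : ℤ) :
    (∫ θ in (0:ℝ)..Real.pi, Real.sin (a * θ) * Real.sin (b * θ)) =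
      Real.pi / 2 * ((if a = b then (1:ℝ) else 0) - (if a = -b then 1 else 0)) := by
  have h : ∀ θ : ℝ, Real.sin (a*θ) * Real.sin (b*θ)
      = (Real.cos (((a-b : ℤ) : ℝ)*θ) - Real.cos (((a+b : ℤ) : ℝ)*θ))/2 := by
    intro θ
    rw [show ((a-b : ℤ) : ℝ)*θ = (a:ℝ)*θ - (b:ℝ)*θ by push_cast; ring,
        show ((a+b : ℤ) : ℝ)*θ = (a:ℝ)*θ + (b:ℝ)*θ by push_cast; ring,
        Real.cos_sub, Real.cos_add]
    ring
  simp only [h]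
  have hi1 : IntervalIntegrable (fun θ : ℝ => Real.cos (((a-b:ℤ):ℝ)*θ)) MeasureTheory.volume 0 Real.pi :=
    (Real.continuous_cos.comp (continuous_const.mul continuous_id)).intervalIntegrable 0 Real.pi
  have hi2 : IntervalIntegrable (fun θ : ℝ => Real.cos (((a+b:ℤ):ℝ)*θ)) MeasureTheory.volume 0 Real.pi :=
    (Real.continuous_cos.comp (continuous_const.mul continuous_id)).intervalIntegrable 0 Real.pi
  rw [intervalIntegral.integral_div, intervalIntegral.integral_sub hi1 hi2,
      integral_cos_int_mul, integral_cos_int_mul]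
  have h1 : a - b = 0 ↔ a = b := sub_eq_zero
  have h2 : a + b = 0 ↔ a = -b := add_eq_zero_iff_eq_neg
  by_cases hab : a = b <;> by_cases hab2 : a = -b <;> by_cases hb : b = 0 <;>
    simp_all <;> try ring
  all_goals omega


private lemma hasSum_aux (t : ℝ) (ht : |t| < 1) (l : ℕ) (θ : ℝ) :
    HasSum (fun j : ℕ => t ^ j * Real.sin (((l : ℝ) + 1 + 2 * j) * θ))
      ((Real.sin (((l : ℝ) + 1) * θ) - t * Real.sin ((((l : ℤ) - 1 : ℤ) : ℝ) * θ)) /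
        (1 - 2 * t * Real.cos (2 * θ) + t ^ 2)) := by
  set D : ℝ := 1 - 2 * t * Real.cos (2 * θ) + t ^ 2 with hDdef
  have htc : t * Real.cos (2 * θ) ≤ |t| := by
    calc t * Real.cos (2*θ) ≤ |t * Real.cos (2*θ)| := le_abs_self _
    _ = |t| * |Real.cos (2*θ)| := abs_mul _ _
    _ ≤ |t| * 1 := mul_le_mul_of_nonneg_left (Real.abs_cos_le_one _) (abs_nonneg t)
    _ = |t| := mul_one _
  have hD : 0 < D := by
    have h2 : (1 - |t|)^2 ≤ D := by
      rw [hDdef]; nlinarith [_root_.sq_abs t]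
    nlinarith [sq_nonneg (1 - |t|)]
  set w : ℂ := Complex.exp ((2 * θ : ℝ) * Complex.I) with hw
  have hw0 : w ≠ 0 := Complex.exp_ne_zero _
  have hnw : ‖(t : ℂ) * w‖ < 1 := by
    rw [norm_mul, hw,
      Complex.norm_exp_ofReal_mul_I, Complex.norm_real, Real.norm_eq_abs, mul_one]
    exact ht
  have h0 := hasSum_geometric_of_norm_lt_one hnw
  have h1 := (h0.mul_left (Complex.exp ((((l : ℝ) + 1) * θ : ℝ) * Complex.I))).mapL
    Complex.imCLM
  have hcos : w + w⁻¹ = 2 * (Real.cos (2 * θ) : ℂ) := by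
    rw [hw, ← Complex.exp_neg, ← neg_mul, Complex.exp_mul_I, Complex.exp_mul_I,
      Complex.cos_neg, Complex.sin_neg, Complex.ofReal_cos]
    ring
  have hprod : (1 - (t : ℂ) * w) * (1 - (t : ℂ) * w⁻¹) = (D : ℂ) := by
    have e : (1 - (t:ℂ)*w) * (1 - (t:ℂ)*w⁻¹) = 1 - t * (w + w⁻¹) + t^2 * (w * w⁻¹) := by ring
    rw [e, hcos, mul_inv_cancel₀ hw0, hDdef]
    push_cast
    ring
  have hDne : (D : ℂ) ≠ 0 := Complex.ofReal_ne_zero.mpr hD.ne'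
  have hinv : (1 - (t : ℂ) * w)⁻¹ = (1 - (t : ℂ) * w⁻¹) * (D : ℂ)⁻¹ :=
    inv_eq_of_mul_eq_one_right (by rw [← mul_assoc, hprod, mul_inv_cancel₀ hDne])
  convert h1 using 2 with j
  · -- termwise
    have e1 : Complex.exp ((((l : ℝ) + 1) * θ : ℝ) * Complex.I) * ((t:ℂ)*w)^j
        = ((t^j : ℝ) : ℂ) * Complex.exp ((((l : ℝ) + 1 + 2*j) * θ : ℝ) * Complex.I) := by
      rw [mul_pow, hw, ← Complex.exp_nat_mul]
      rw [show Complex.exp ((((l : ℝ) + 1) * θ : ℝ) * Complex.I) *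
          ((t:ℂ)^j * Complex.exp ((j:ℂ) * (((2*θ : ℝ) : ℂ) * Complex.I)))
          = (t:ℂ)^j * (Complex.exp ((((l : ℝ) + 1) * θ : ℝ) * Complex.I) *
            Complex.exp ((j:ℂ) * (((2*θ : ℝ) : ℂ) * Complex.I))) from by ring,
        ← Complex.exp_add]
      rw [show ((((l : ℝ) + 1) * θ : ℝ) : ℂ) * Complex.I + (j:ℂ) * (((2*θ : ℝ) : ℂ) * Complex.I)
          = ((((l : ℝ) + 1 + 2*j) * θ : ℝ) : ℂ) * Complex.I from by push_cast; ring]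
      push_cast
      ring
    rw [e1]
    rw [Complex.imCLM_apply, Complex.im_ofReal_mul, Complex.exp_ofReal_mul_I_im]
  · -- sum
    have e2 : Complex.exp ((((l : ℝ) + 1) * θ : ℝ) * Complex.I) * (1 - (t:ℂ)*w)⁻¹
        = ((D⁻¹ : ℝ) : ℂ) * (Complex.exp ((((l : ℝ) + 1) * θ : ℝ) * Complex.I)
            - (t:ℂ) * Complex.exp ((((((l : ℤ) - 1 : ℤ) : ℝ) * θ : ℝ) : ℂ) * Complex.I)) := by
      rw [hinv, hw, ← Complex.exp_neg]
      rw [show Complex.exp ((((l : ℝ) + 1) * θ : ℝ) * Complex.I) *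
          ((1 - (t:ℂ) * Complex.exp (-(((2*θ : ℝ) : ℂ) * Complex.I))) * ((D:ℝ) : ℂ)⁻¹)
          = ((D:ℝ) : ℂ)⁻¹ * (Complex.exp ((((l : ℝ) + 1) * θ : ℝ) * Complex.I)
            - (t:ℂ) * (Complex.exp ((((l : ℝ) + 1) * θ : ℝ) * Complex.I) *
              Complex.exp (-(((2*θ : ℝ) : ℂ) * Complex.I)))) from by ring,
        ← Complex.exp_add]
      rw [show ((((l : ℝ) + 1) * θ : ℝ) : ℂ) * Complex.I + -(((2*θ : ℝ) : ℂ) * Complex.I)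
          = ((((((l : ℤ) - 1 : ℤ) : ℝ) * θ : ℝ) : ℂ) * Complex.I) from by push_cast; ring]
      rw [Complex.ofReal_inv]
    rw [e2]
    rw [Complex.imCLM_apply, Complex.im_ofReal_mul, Complex.sub_im, Complex.im_ofReal_mul,
      Complex.exp_ofReal_mul_I_im, Complex.exp_ofReal_mul_I_im]
    rw [div_eq_mul_inv]
    ring




theorem deformed_character_orthogonality (k : ℕ) (hk : 0 < k) (t : ℝ) (ht : |t| < 1)
    (l1 l2 : ℕ) (h1 : l1 ≤ k) (h2 : l2 ≤ k) :
    (∫ θ in (0 : ℝ)..Real.pi,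
      ((Real.sin (((l1 : ℝ) + 1) * θ) -
          t * Real.sin ((((l1 : ℤ) - 1 : ℤ) : ℝ) * θ)) *
        (Real.sin (((l2 : ℝ) + 1) * θ) -
          t * Real.sin ((((l2 : ℤ) - 1 : ℤ) : ℝ) * θ))) /
        (1 - 2 * t * Real.cos (2 * θ) + t ^ 2)) =
      if l1 = l2 then (if l1 = 0 then Real.pi / 2 * (1 + t) else Real.pi / 2)
      else 0 := by
  set P1 : ℝ → ℝ := fun θ => Real.sin (((l1 : ℝ) + 1) * θ) -
      t * Real.sin ((((l1 : ℤ) - 1 : ℤ) : ℝ) * θ) with hP1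
  set F : ℕ → ℝ → ℝ := fun j θ =>
    P1 θ * (t ^ j * Real.sin (((l2 : ℝ) + 1 + 2 * j) * θ)) with hF
  have hP1bd : ∀ θ : ℝ, |P1 θ| ≤ 1 + |t| := by
    intro θ
    calc |P1 θ| ≤ |Real.sin (((l1 : ℝ) + 1) * θ)| +
        |t * Real.sin ((((l1 : ℤ) - 1 : ℤ) : ℝ) * θ)| := abs_sub _ _
    _ ≤ 1 + |t| * 1 := by
        refine add_le_add (Real.abs_sin_le_one _) ?_
        rw [abs_mul]
        exact mul_le_mul_of_nonneg_left (Real.abs_sin_le_one _) (abs_nonneg t)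
    _ = 1 + |t| := by ring
  have hpt : ∀ θ : ℝ, HasSum (fun j : ℕ => F j θ)
      ((P1 θ * (Real.sin (((l2 : ℝ) + 1) * θ) -
          t * Real.sin ((((l2 : ℤ) - 1 : ℤ) : ℝ) * θ))) /
        (1 - 2 * t * Real.cos (2 * θ) + t ^ 2)) := by
    intro θ
    rw [mul_div_assoc]
    exact (hasSum_aux t ht l2 θ).mul_left (P1 θ)
  have key : HasSum (fun j : ℕ => ∫ θ in (0:ℝ)..Real.pi, F j θ)
      (∫ θ in (0:ℝ)..Real.pi,
        (P1 θ * (Real.sin (((l2 : ℝ) + 1) * θ) -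
            t * Real.sin ((((l2 : ℤ) - 1 : ℤ) : ℝ) * θ))) /
          (1 - 2 * t * Real.cos (2 * θ) + t ^ 2)) := by
    apply intervalIntegral.hasSum_integral_of_dominated_convergence
      (bound := fun j _ => (1 + |t|) * |t| ^ j)
    · intro j
      apply Continuous.aestronglyMeasurable
      fun_prop
    · intro j
      filter_upwards with θ _
      rw [hF]
      simp only [Real.norm_eq_abs]
      rw [abs_mul]
      have hb2 : |t ^ j * Real.sin (((l2:ℝ) + 1 + 2*j) * θ)| ≤ |t| ^ j := by
        rw [abs_mul, _root_.abs_pow]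
        calc |t|^j * |Real.sin (((l2:ℝ) + 1 + 2*j) * θ)| ≤ |t|^j * 1 :=
              mul_le_mul_of_nonneg_left (Real.abs_sin_le_one _) (pow_nonneg (abs_nonneg t) j)
        _ = |t|^j := mul_one _
      exact mul_le_mul (hP1bd θ) hb2 (abs_nonneg _) (by positivity)
    · filter_upwards with θ _
      exact (summable_geometric_of_lt_one (abs_nonneg t) ht).mul_left _
    · exact intervalIntegrable_const
    · filter_upwards with θ _
      exact hpt θ
  rw [← key.tsum_eq]
  have hFj : ∀ j : ℕ, (∫ θ in (0:ℝ)..Real.pi, F j θ)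
      = Real.pi/2 * ((if (l1:ℤ) = l2 + 2*j then t^j else 0)
             - (if (l1:ℤ) = l2 + 2 + 2*j then t^(j+1) else 0)
             + (if l1 = 0 ∧ l2 = 0 ∧ j = 0 then t else 0)) := by
    intro j
    have hre : ∀ θ : ℝ, F j θ =
        t^j * (Real.sin (((l1+1 : ℤ) : ℝ)*θ) * Real.sin (((l2+1+2*(j:ℤ) : ℤ) : ℝ)*θ))
        - t^(j+1) * (Real.sin ((((l1:ℤ)-1 : ℤ) : ℝ)*θ) * Real.sin (((l2+1+2*(j:ℤ) : ℤ) : ℝ)*θ)) := by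
      intro θ
      rw [hF, hP1]
      push_cast
      ring
    rw [intervalIntegral.integral_congr (fun θ _ => hre θ)]
    rw [intervalIntegral.integral_sub (by apply Continuous.intervalIntegrable; fun_prop)
        (by apply Continuous.intervalIntegrable; fun_prop),
      intervalIntegral.integral_const_mul, intervalIntegral.integral_const_mul,
      integral_sin_mul_sin_int, integral_sin_mul_sin_int]
    have c1 : ((l1:ℤ)+1 = (l2:ℤ)+1+2*(j:ℤ)) ↔ ((l1:ℤ) = l2 + 2*j) := by omega
    have c2 : ((l1:ℤ)+1 = -((l2:ℤ)+1+2*(j:ℤ))) ↔ False := by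
      constructor
      · intro h; omega
      · exact False.elim
    have c3 : ((l1:ℤ)-1 = (l2:ℤ)+1+2*(j:ℤ)) ↔ ((l1:ℤ) = l2 + 2 + 2*j) := by omega
    have c4 : ((l1:ℤ)-1 = -((l2:ℤ)+1+2*(j:ℤ))) ↔ (l1 = 0 ∧ l2 = 0 ∧ j = 0) := by omega
    simp only [c1, c2, c3, c4, if_false]
    split_ifs <;>
      first
        | ring1
        | (exfalso; omega)
        | (rename_i hC; obtain ⟨-, -, rfl⟩ := hC; ring1)
  rw [tsum_congr hFj]
  by_cases hl : l1 = l2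
  · subst hl
    rw [if_pos rfl]
    rw [tsum_eq_sum (s := {0}) ?_]
    · rw [Finset.sum_singleton]
      have e1 : ((l1:ℤ) = l1 + 2*((0:ℕ):ℤ)) := by push_cast; ring
      have e2 : ¬((l1:ℤ) = l1 + 2 + 2*((0:ℕ):ℤ)) := by push_cast; omega
      by_cases h0 : l1 = 0
      · subst h0
        norm_num
      · rw [if_neg h0]
        have e3 : ¬(l1 = 0 ∧ l1 = 0 ∧ (0:ℕ) = 0) := by tauto
        simp only [eq_true e1, eq_false e2, eq_false e3, if_true, if_false]
        norm_num
        exact fun h => absurd h h0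
    · intro j hj
      have hj0 : j ≠ 0 := by simpa using hj
      have e1 : ¬((l1:ℤ) = l1 + 2*(j:ℤ)) := by omega
      have e2 : ¬((l1:ℤ) = l1 + 2 + 2*(j:ℤ)) := by omega
      have e3 : ¬(l1 = 0 ∧ l1 = 0 ∧ j = 0) := by tauto
      simp only [eq_false e1, eq_false e2, eq_false e3, if_false]
      norm_num
  · rw [if_neg hl]
    by_cases hd : ∃ p : ℕ, l1 = l2 + 2*(p+1)
    · obtain ⟨p, hp⟩ := hd
      rw [tsum_eq_sum (s := {p, p+1}) ?_]
      · rw [Finset.sum_pair (by omega : p ≠ p + 1)]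
        have a1 : ¬((l1:ℤ) = l2 + 2*(p:ℤ)) := by omega
        have b1 : ((l1:ℤ) = l2 + 2 + 2*(p:ℤ)) := by omega
        have a2 : ((l1:ℤ) = l2 + 2*((p+1:ℕ):ℤ)) := by push_cast; omega
        have b2 : ¬((l1:ℤ) = l2 + 2 + 2*((p+1:ℕ):ℤ)) := by push_cast; omega
        have hc : ¬(l1 = 0 ∧ l2 = 0 ∧ p = 0) := by omega
        have hc2 : ¬(l1 = 0 ∧ l2 = 0 ∧ p + 1 = 0) := by omega
        simp only [eq_false a1, eq_true b1, eq_true a2, eq_false b2, eq_false hc,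
          eq_false hc2, if_true, if_false]
        ring
      · intro j hj
        simp only [Finset.mem_insert, Finset.mem_singleton] at hj
        push_neg at hj
        have e1 : ¬((l1:ℤ) = l2 + 2*(j:ℤ)) := by omega
        have e2 : ¬((l1:ℤ) = l2 + 2 + 2*(j:ℤ)) := by omega
        have e3 : ¬(l1 = 0 ∧ l2 = 0 ∧ j = 0) := by omega
        simp only [eq_false e1, eq_false e2, eq_false e3, if_false]
        norm_num
    · push_neg at hd
      rw [tsum_eq_sum (s := (∅ : Finset ℕ)) ?_]
      · simp
      · intro j _
        have e1 : ¬((l1:ℤ) = l2 + 2*(j:ℤ)) := by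
          intro h
          rcases Nat.eq_zero_or_pos j with rfl | hj
          · exact hl (by omega)
          · exact hd (j-1) (by omega)
        have e2 : ¬((l1:ℤ) = l2 + 2 + 2*(j:ℤ)) := fun h => hd j (by omega)
        have e3 : ¬(l1 = 0 ∧ l2 = 0 ∧ j = 0) := fun ⟨ha, hb, _⟩ => hl (ha.trans hb.symm)
        simp only [eq_false e1, eq_false e2, eq_false e3, if_false]
        norm_num
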